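/- arXiv:1911.02424 — 5 statements merged into one kernel-verified Lean document; each statement's English description precedes it below -/
import Mathlib

section
/- Let A ∈ ℝ^{p×p} and C ∈ ℝ^{q×q} be symmetric matrices and B ∈ ℝ^{q×p} be such that the block matrix P = [[A, Bᵀ],[B, C]] ∈ ℝ^{(p+q)×(p+q)} is positive semidefinite. Let Γ ∈ ℝ^{p×p} be symmetric positive definite and h > 0. Then the matrix P + blockdiag(h^{−1}Γ, h^{−1}I_q) is invertible and [B C] (P + blockdiag(h^{−1}Γ, h^{−1}I_q))^{−1} [B C]ᵀ ⪰ C (C + h^{−1}I_q)^{−1} C in the Loewner order, where [B C] ∈ ℝ^{q×(p+q)} is the horizontal concatenation of B and C. -/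
open scoped BigOperators
open Matrix

noncomputable section

/-- Euclidean norm of a vector `v : Fin d → ℝ`. -/
def evNorm {d : ℕ} (v : Fin d → ℝ) : ℝ := Real.sqrt (∑ i, v i ^ 2)

/-- Spectral (ℓ²-operator) norm of a real matrix. -/
def spNorm {p q : ℕ} (A : Matrix (Fin p) (Fin q) ℝ) : ℝ :=
  sSup {r : ℝ | ∃ v : Fin q → ℝ, evNorm v ≤ 1 ∧ r = evNorm (A.mulVec v)}

/-- Smallest eigenvalue (Rayleigh quotient infimum) of a square matrix. -/
def lambdaMin {d : ℕ} (A : Matrix (Fin d) (Fin d) ℝ) : ℝ :=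
  sInf {r : ℝ | ∃ v : Fin d → ℝ, evNorm v = 1 ∧ r = v ⬝ᵥ A.mulVec v}

/-- Loewner order `A ⪯ B` : `B - A` is positive semidefinite. -/
def loewnerLE {d : ℕ} (A B : Matrix (Fin d) (Fin d) ℝ) : Prop := (B - A).PosSemidef

/-- Sample mean of an ensemble of `K` vectors. -/
def sMean {K d : ℕ} (u : Fin K → Fin d → ℝ) : Fin d → ℝ := (K : ℝ)⁻¹ • ∑ i, u i

/-- Sample (cross-)covariance of two ensembles. -/
def sCov {K p q : ℕ} (a : Fin K → Fin p → ℝ) (b : Fin K → Fin q → ℝ) :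
    Matrix (Fin p) (Fin q) ℝ :=
  (K : ℝ)⁻¹ • ∑ i, Matrix.of (fun j l => (a i j - sMean a j) * (b i l - sMean b l))

/-- Jacobian matrix of a map between finite-dimensional coordinate spaces. -/
def jac {a b : ℕ} (H : (Fin a → ℝ) → Fin b → ℝ) (x : Fin a → ℝ) :
    Matrix (Fin b) (Fin a) ℝ :=
  Matrix.of fun i j => fderiv ℝ H x (Pi.single j 1) i

/-- Gradient (coordinate) vector of a scalar function. -/
def gradVec {d : ℕ} (f : (Fin d → ℝ) → ℝ) (x : Fin d → ℝ) : Fin d → ℝ :=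
  fun j => fderiv ℝ f x (Pi.single j 1)

/-- The augmented (Tikhonov) observation map `u ↦ (G u, u)`. -/
def aug {du dy : ℕ} (G : (Fin du → ℝ) → Fin dy → ℝ) (u : Fin du → ℝ) :
    Fin (dy + du) → ℝ :=
  Fin.append (G u) u

/-- The augmented noise covariance `Γ₊ = blockdiag(Γ, I)`. -/
def gammaPlus {dy du : ℕ} (Γ : Matrix (Fin dy) (Fin dy) ℝ) :
    Matrix (Fin (dy + du)) (Fin (dy + du)) ℝ :=
  Matrix.reindex finSumFinEquiv finSumFinEquiv (Matrix.fromBlocks Γ 0 0 1)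

/-- `C^{uu}`: sample covariance of the ensemble. -/
def Cuu {K du : ℕ} (u : Fin K → Fin du → ℝ) : Matrix (Fin du) (Fin du) ℝ := sCov u u

/-- `C^{up}`: sample cross-covariance of the ensemble and its (augmented) observations. -/
def Cup {K du dy : ℕ} (G : (Fin du → ℝ) → Fin dy → ℝ) (u : Fin K → Fin du → ℝ) :
    Matrix (Fin du) (Fin (dy + du)) ℝ :=
  sCov u (fun i => aug G (u i))

/-- `C^{pp}`: sample covariance of the (augmented) observations. -/
def Cpp {K du dy : ℕ} (G : (Fin du → ℝ) → Fin dy → ℝ) (u : Fin K → Fin du → ℝ) :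
    Matrix (Fin (dy + du)) (Fin (dy + du)) ℝ :=
  sCov (fun i => aug G (u i)) (fun i => aug G (u i))


lemma dp_symm {n : Type*} [Fintype n] {M : Matrix n n ℝ} (hM : Mᵀ = M)
    (x y : n → ℝ) : x ⬝ᵥ M *ᵥ y = y ⬝ᵥ M *ᵥ x := by
  rw [dotProduct_mulVec]
  conv_lhs => rw [← hM, vecMul_transpose]
  rw [dotProduct_comm]

lemma dp_mulVec_left {m n : Type*} [Fintype m] [Fintype n]
    (A : Matrix m n ℝ) (x : n → ℝ) (y : m → ℝ) :
    (A *ᵥ x) ⬝ᵥ y = x ⬝ᵥ (Aᵀ *ᵥ y) := by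
  conv_rhs => rw [dotProduct_mulVec, vecMul_transpose]

lemma psd_cs {n : Type*} [Fintype n] {M : Matrix n n ℝ}
    (hM : M.PosSemidef) (a b : n → ℝ) :
    (a ⬝ᵥ M *ᵥ b) ^ 2 ≤ (a ⬝ᵥ M *ᵥ a) * (b ⬝ᵥ M *ᵥ b) := by
  have hsym : Mᵀ = M := by
    have := hM.isHermitian
    rwa [Matrix.IsHermitian, conjTranspose_eq_transpose_of_trivial] at this
  have hba : b ⬝ᵥ M *ᵥ a = a ⬝ᵥ M *ᵥ b := dp_symm hsym b a
  have key : ∀ t : ℝ, 0 ≤ (b ⬝ᵥ M *ᵥ b) * (t * t) + (2 * (a ⬝ᵥ M *ᵥ b)) * t + (a ⬝ᵥ M *ᵥ a) := by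
    intro t
    have h0 := hM.dotProduct_mulVec_nonneg (a + t • b)
    simp only [star_trivial, mulVec_add, mulVec_smul, dotProduct_add, add_dotProduct,
      dotProduct_smul, smul_dotProduct, smul_eq_mul, hba] at h0
    nlinarith [h0]
  have hd := discrim_le_zero key
  rw [discrim] at hd
  nlinarith [hd]

lemma posDef_smul {n : Type*} [Fintype n] {M : Matrix n n ℝ} (hM : M.PosDef)
    {c : ℝ} (hc : 0 < c) : (c • M).PosDef := by
  refine Matrix.PosDef.of_dotProduct_mulVec_pos ?_ (fun x hx => ?_)
  · show (c • M)ᴴ = c • M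
    rw [conjTranspose_smul, hM.1.eq, star_trivial]
  · rw [smul_mulVec, dotProduct_smul, smul_eq_mul]
    exact mul_pos hc (by simpa using hM.dotProduct_mulVec_pos hx)

lemma posDef_blockDiag {m n : Type*} [Fintype m] [Fintype n] [DecidableEq m] [DecidableEq n]
    {X : Matrix m m ℝ} {Y : Matrix n n ℝ} (hX : X.PosDef) (hY : Y.PosDef) :
    (Matrix.fromBlocks X 0 0 Y).PosDef := by
  refine Matrix.PosDef.of_dotProduct_mulVec_pos ?_ (fun x hx => ?_)
  · have h1 : Xᵀ = X := by
      simpa [conjTranspose_eq_transpose_of_trivial] using hX.1.eq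
    have h2 : Yᵀ = Y := by
      simpa [conjTranspose_eq_transpose_of_trivial] using hY.1.eq
    show (Matrix.fromBlocks X 0 0 Y)ᴴ = _
    rw [fromBlocks_conjTranspose]
    simp [conjTranspose_eq_transpose_of_trivial, h1, h2]
  · have hxeq : x = Sum.elim (x ∘ Sum.inl) (x ∘ Sum.inr) := (Sum.elim_comp_inl_inr x).symm
    rw [star_trivial]
    conv_rhs => rw [hxeq]
    rw [fromBlocks_mulVec]
    simp only [zero_mulVec, add_zero, zero_add, Sum.elim_comp_inl, Sum.elim_comp_inr]
    rw [sumElim_dotProduct_sumElim]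
    rcases (em (x ∘ Sum.inl = 0)) with h1 | h1
    · have h2 : x ∘ Sum.inr ≠ 0 := by
        intro h2; apply hx; funext i; cases i with
        | inl i => exact congrFun h1 i
        | inr i => exact congrFun h2 i
      have := hY.dotProduct_mulVec_pos h2
      rw [star_trivial] at this
      have hX0 := hX.posSemidef.dotProduct_mulVec_nonneg (x ∘ Sum.inl)
      rw [star_trivial] at hX0
      linarith
    · have := hX.dotProduct_mulVec_pos h1
      rw [star_trivial] at this
      have hY0 := hY.posSemidef.dotProduct_mulVec_nonneg (x ∘ Sum.inr)
      rw [star_trivial] at hY0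
      linarith


lemma ring_identity {R : Type*} [Ring R] (M D X : R) (h1 : M * X = 1) (h2 : X * M = 1) :
    (M - D) * X * (M - D) = M - D - D + D * X * D := by
  calc (M - D) * X * (M - D) = (M * X - D * X) * (M - D) := by rw [sub_mul]
    _ = (1 - D * X) * (M - D) := by rw [h1]
    _ = M - D - (D * X * M - D * X * D) := by rw [sub_mul, one_mul, mul_sub]
    _ = M - D - (D - D * X * D) := by rw [mul_assoc D X M, h2, mul_one]
    _ = M - D - D + D * X * D := by abel

lemma psd_smul' {n : Type*} [Fintype n] {M : Matrix n n ℝ} (hM : M.PosSemidef)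
    {c : ℝ} (hc : 0 ≤ c) : (c • M).PosSemidef := by
  refine Matrix.PosSemidef.of_dotProduct_mulVec_nonneg ?_ (fun x => ?_)
  · show (c • M)ᴴ = c • M
    rw [conjTranspose_smul, hM.1.eq, star_trivial]
  · rw [smul_mulVec, dotProduct_smul, smul_eq_mul]
    exact mul_nonneg hc (by simpa using hM.dotProduct_mulVec_nonneg x)

set_option maxHeartbeats 1000000 in
/-- Lemma: block-matrix inequality used in the covariance analysis.
If `P = [[A, Bᵀ],[B, C]]` is PSD, `Γ` is SPD and `h > 0`, then `P + blockdiag(h⁻¹Γ, h⁻¹I)` is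
invertible and `[B C] (P + blockdiag(h⁻¹Γ, h⁻¹I))⁻¹ [B C]ᵀ ⪰ C (C + h⁻¹ I)⁻¹ C`. -/
theorem block_matrix_schur_bound
    {p q : ℕ}
    (A : Matrix (Fin p) (Fin p) ℝ) (hA : A.IsSymm)
    (C : Matrix (Fin q) (Fin q) ℝ) (hC : C.IsSymm)
    (B : Matrix (Fin q) (Fin p) ℝ)
    (hP : (Matrix.fromBlocks A Bᵀ B C).PosSemidef)
    (Γ : Matrix (Fin p) (Fin p) ℝ) (hΓ : Γ.PosDef)
    (h : ℝ) (hh : 0 < h) :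
    IsUnit (Matrix.fromBlocks A Bᵀ B C +
        Matrix.fromBlocks (h⁻¹ • Γ) 0 0 (h⁻¹ • (1 : Matrix (Fin q) (Fin q) ℝ))) ∧
    ((Matrix.fromCols B C *
        (Matrix.fromBlocks A Bᵀ B C +
          Matrix.fromBlocks (h⁻¹ • Γ) 0 0 (h⁻¹ • (1 : Matrix (Fin q) (Fin q) ℝ)))⁻¹ *
        (Matrix.fromCols B C)ᵀ) -
      C * (C + h⁻¹ • (1 : Matrix (Fin q) (Fin q) ℝ))⁻¹ * C).PosSemidef := by
  have hc : 0 < h⁻¹ := inv_pos.mpr hh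
  set P : Matrix (Fin p ⊕ Fin q) (Fin p ⊕ Fin q) ℝ := Matrix.fromBlocks A Bᵀ B C with hPdef
  set D : Matrix (Fin p ⊕ Fin q) (Fin p ⊕ Fin q) ℝ :=
    Matrix.fromBlocks (h⁻¹ • Γ) 0 0 (h⁻¹ • (1 : Matrix (Fin q) (Fin q) ℝ)) with hDdef
  set S : Matrix (Fin q) (Fin q) ℝ := C + h⁻¹ • (1 : Matrix (Fin q) (Fin q) ℝ) with hSdef
  have hD : D.PosDef := posDef_blockDiag (posDef_smul hΓ hc) (posDef_smul Matrix.PosDef.one hc)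
  have hM : (P + D).PosDef := Matrix.PosDef.posSemidef_add hP hD
  set X : Matrix (Fin p ⊕ Fin q) (Fin p ⊕ Fin q) ℝ := (P + D)⁻¹ with hXdef
  have h1 : (P + D) * X = 1 := Matrix.mul_nonsing_inv _ hM.det_pos.ne'.isUnit
  have h2 : X * (P + D) = 1 := Matrix.nonsing_inv_mul _ hM.det_pos.ne'.isUnit
  refine ⟨hM.isUnit, ?_⟩
  set E : Matrix (Fin p ⊕ Fin q) (Fin q) ℝ :=
    Matrix.fromRows (0 : Matrix (Fin p) (Fin q) ℝ) (1 : Matrix (Fin q) (Fin q) ℝ) with hEdef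
  have hEt : Eᵀ = Matrix.fromCols (0 : Matrix (Fin q) (Fin p) ℝ) (1 : Matrix (Fin q) (Fin q) ℝ) := by
    rw [hEdef, transpose_fromRows, transpose_zero, transpose_one]
  have hPsymm : Pᵀ = P := by
    rw [hPdef, fromBlocks_transpose, transpose_transpose, hA, hC]
  have hF : Matrix.fromCols B C = Eᵀ * P := by
    rw [hEt, hPdef, fromCols_mul_fromBlocks]
    simp
  have hFt : (Matrix.fromCols B C)ᵀ = P * E := by
    rw [hF, transpose_mul, transpose_transpose, hPsymm]
  have hDE : D * E = h⁻¹ • E := by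
    rw [hDdef, hEdef, fromBlocks_mul_fromRows]
    ext (i | i) j <;> simp
  have hED : Eᵀ * D = h⁻¹ • Eᵀ := by
    rw [hEt, hDdef, fromCols_mul_fromBlocks]
    ext i (j | j) <;> simp [Matrix.fromCols]
  have hETE : Eᵀ * E = 1 := by
    rw [hEt, hEdef, fromCols_mul_fromRows]
    simp
  have hEPE : Eᵀ * P * E = C := by
    rw [← hF, hEdef, fromCols_mul_fromRows]
    simp
  have hEDE : Eᵀ * D * E = h⁻¹ • (1 : Matrix (Fin q) (Fin q) ℝ) := by
    rw [hED, Matrix.smul_mul, hETE]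
  have hEME : Eᵀ * (P + D) * E = S := by
    rw [Matrix.mul_add, Matrix.add_mul, hEPE, hEDE, hSdef]
  have hCpsd : C.PosSemidef := by
    have := hP.conjTranspose_mul_mul_same E
    rwa [conjTranspose_eq_transpose_of_trivial, hEPE] at this
  have hS : S.PosDef := Matrix.PosDef.posSemidef_add hCpsd (posDef_smul Matrix.PosDef.one hc)
  have hs1 : S * S⁻¹ = 1 := Matrix.mul_nonsing_inv _ hS.det_pos.ne'.isUnit
  have hs2 : S⁻¹ * S = 1 := Matrix.nonsing_inv_mul _ hS.det_pos.ne'.isUnit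
  set Q : Matrix (Fin q) (Fin q) ℝ := Eᵀ * X * E with hQdef
  -- key identity for the LHS
  have hPM : P * X * P = P - D + D * X * D := by
    have := ring_identity (P + D) D X h1 h2
    simpa [add_sub_cancel_right] using this
  have hQsm : Eᵀ * (D * X * D) * E = (h⁻¹ * h⁻¹) • Q := by
    calc Eᵀ * (D * X * D) * E = (Eᵀ * D) * X * (D * E) := by
          simp only [Matrix.mul_assoc]
      _ = (h⁻¹ • Eᵀ) * X * (h⁻¹ • E) := by rw [hED, hDE]
      _ = (h⁻¹ * h⁻¹) • Q := by
          rw [Matrix.smul_mul, Matrix.smul_mul, Matrix.mul_smul, smul_smul, hQdef]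
  have hL : Matrix.fromCols B C * X * (Matrix.fromCols B C)ᵀ
      = C - h⁻¹ • (1 : Matrix (Fin q) (Fin q) ℝ) + (h⁻¹ * h⁻¹) • Q := by
    calc Matrix.fromCols B C * X * (Matrix.fromCols B C)ᵀ
        = Eᵀ * (P * X * P) * E := by rw [hFt, hF]; simp only [Matrix.mul_assoc]
      _ = Eᵀ * (P - D + D * X * D) * E := by rw [hPM]
      _ = (Eᵀ * P * E) - (Eᵀ * D * E) + Eᵀ * (D * X * D) * E := by
          simp only [Matrix.mul_sub, Matrix.sub_mul, Matrix.mul_add, Matrix.add_mul]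
      _ = C - h⁻¹ • (1 : Matrix (Fin q) (Fin q) ℝ) + (h⁻¹ * h⁻¹) • Q := by
          rw [hEPE, hEDE, hQsm]
  have hR : C * S⁻¹ * C = C - h⁻¹ • (1 : Matrix (Fin q) (Fin q) ℝ) + (h⁻¹ * h⁻¹) • S⁻¹ := by
    have hCS : C = S - h⁻¹ • (1 : Matrix (Fin q) (Fin q) ℝ) := by
      rw [hSdef, add_sub_cancel_right]
    have hri := ring_identity S (h⁻¹ • (1 : Matrix (Fin q) (Fin q) ℝ)) S⁻¹ hs1 hs2
    have hsm : (h⁻¹ • (1 : Matrix (Fin q) (Fin q) ℝ)) * S⁻¹ * (h⁻¹ • (1 : Matrix (Fin q) (Fin q) ℝ))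
        = (h⁻¹ * h⁻¹) • S⁻¹ := by
      rw [Matrix.smul_mul, Matrix.one_mul, Matrix.mul_smul, Matrix.mul_one, smul_smul]
    calc C * S⁻¹ * C
        = (S - h⁻¹ • (1 : Matrix (Fin q) (Fin q) ℝ)) * S⁻¹ *
            (S - h⁻¹ • (1 : Matrix (Fin q) (Fin q) ℝ)) := by rw [← hCS]
      _ = S - h⁻¹ • (1 : Matrix (Fin q) (Fin q) ℝ) - h⁻¹ • (1 : Matrix (Fin q) (Fin q) ℝ)
            + (h⁻¹ * h⁻¹) • S⁻¹ := by rw [hri, hsm]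
      _ = C - h⁻¹ • (1 : Matrix (Fin q) (Fin q) ℝ) + (h⁻¹ * h⁻¹) • S⁻¹ := by
          rw [hCS]
  have hdiff : Matrix.fromCols B C * X * (Matrix.fromCols B C)ᵀ - C * S⁻¹ * C
      = (h⁻¹ * h⁻¹) • (Q - S⁻¹) := by
    rw [hL, hR, smul_sub]; abel
  rw [hdiff]
  -- positive semidefiniteness of Q - S⁻¹
  have hXsym : Xᵀ = X := by
    simpa [conjTranspose_eq_transpose_of_trivial] using hM.inv.1.eq
  have hSisym : (S⁻¹)ᵀ = S⁻¹ := by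
    simpa [conjTranspose_eq_transpose_of_trivial] using hS.inv.1.eq
  have hQS : (Q - S⁻¹).PosSemidef := by
    refine Matrix.PosSemidef.of_dotProduct_mulVec_nonneg ?_ ?_
    · show (Q - S⁻¹)ᴴ = Q - S⁻¹
      rw [conjTranspose_eq_transpose_of_trivial, transpose_sub, hSisym, hQdef]
      simp only [transpose_mul, transpose_transpose, hXsym, Matrix.mul_assoc]
    · intro z
      rw [star_trivial]
      set y : Fin q → ℝ := S⁻¹ *ᵥ z with hy
      set a : Fin p ⊕ Fin q → ℝ := E *ᵥ y with ha
      set b : Fin p ⊕ Fin q → ℝ := X *ᵥ (E *ᵥ z) with hb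
      set t : ℝ := z ⬝ᵥ S⁻¹ *ᵥ z with htdef
      have hMb : (P + D) *ᵥ b = E *ᵥ z := by
        rw [hb, mulVec_mulVec, h1, one_mulVec]
      have hSy : S *ᵥ y = z := by
        rw [hy, mulVec_mulVec, hs1, one_mulVec]
      have hyz : y ⬝ᵥ z = t := by
        rw [htdef, dotProduct_comm, hy]
      have haMa : a ⬝ᵥ (P + D) *ᵥ a = t := by
        rw [ha, dp_mulVec_left, mulVec_mulVec, mulVec_mulVec, hEME, hSy, hyz]
      have haMb : a ⬝ᵥ (P + D) *ᵥ b = t := by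
        rw [hMb, ha, dp_mulVec_left, mulVec_mulVec, hETE, one_mulVec, hyz]
      have hbMb : b ⬝ᵥ (P + D) *ᵥ b = z ⬝ᵥ Q *ᵥ z := by
        rw [hMb, hb, dp_mulVec_left, hXsym, dp_mulVec_left, mulVec_mulVec, mulVec_mulVec,
          ← hQdef]
      have ht : 0 ≤ t := by
        have h0 := hS.inv.posSemidef.dotProduct_mulVec_nonneg z
        rw [star_trivial] at h0
        rw [htdef]
        exact h0
      have hu : 0 ≤ z ⬝ᵥ Q *ᵥ z := by
        have := hM.posSemidef.dotProduct_mulVec_nonneg b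
        rw [star_trivial, hbMb] at this
        exact this
      have hcs := psd_cs hM.posSemidef a b
      rw [haMa, haMb, hbMb] at hcs
      rw [sub_mulVec, dotProduct_sub]
      nlinarith [hcs, ht, hu]
  exact psd_smul' hQS (le_of_lt (mul_pos hc hc))
end
end

section
/- Let h_0, α_0 > 0 and let the parameters satisfy 0 ≤ γ ≤ 1 and β ≤ γ ≤ 1 + β. Define h_n = h_0 n^β and α_n² = α_0² h_0^{−1} n^{2γ−β−2} for n ≥ 1. Suppose (ω_n)_{n≥1} is a sequence of positive reals with ω_1 ≥ h_0/(1 + α_0² h_0) and ω_{n+1} ≥ (ω_n + h_n)/(1 + α_n²(ω_n + h_n)) for all n ≥ 1. Then there exists κ > 0 such that ω_n ≥ h_0 κ n^{1+β−γ} for all n ≥ 1. -/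
set_option maxHeartbeats 1000000


/-- Lemma: lower bound for the recursive precision sequence `ωₙ`. -/
theorem precision_sequence_lower_bound
    (h₀ α₀ γ β : ℝ) (hh₀ : 0 < h₀) (hα₀ : 0 < α₀)
    (hγ0 : 0 ≤ γ) (hγ1 : γ ≤ 1) (hβγ : β ≤ γ) (hγβ : γ ≤ 1 + β)
    (ω : ℕ → ℝ) (hωpos : ∀ n : ℕ, 1 ≤ n → 0 < ω n)
    (hω1 : h₀ / (1 + α₀ ^ 2 * h₀) ≤ ω 1)
    (hrec : ∀ n : ℕ, 1 ≤ n →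
      (ω n + h₀ * (n : ℝ) ^ β) /
          (1 + (α₀ ^ 2 * h₀⁻¹ * (n : ℝ) ^ (2 * γ - β - 2)) * (ω n + h₀ * (n : ℝ) ^ β)) ≤
        ω (n + 1)) :
    ∃ κ : ℝ, 0 < κ ∧ ∀ n : ℕ, 1 ≤ n → h₀ * κ * (n : ℝ) ^ (1 + β - γ) ≤ ω n := by
  set s : ℝ := 1 + β - γ with hs_def
  have hs0 : 0 ≤ s := by simp [hs_def]; linarith
  have hs1 : s ≤ 1 := by simp [hs_def]; linarith
  have hsβ : s - 1 ≤ β := by simp [hs_def]; linarith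
  clear_value s
  set κ : ℝ := min (1 / (1 + 4 * α₀ ^ 2)) (1 / (1 + α₀ ^ 2 * h₀)) with hκ_def
  have hd1 : (0:ℝ) < 1 + 4 * α₀ ^ 2 := by positivity
  have hd2 : (0:ℝ) < 1 + α₀ ^ 2 * h₀ := by positivity
  have hκpos : 0 < κ := lt_min (by positivity) (by positivity)
  have hκ1 : κ * (1 + 4 * α₀ ^ 2) ≤ 1 := by
    have := min_le_left (1 / (1 + 4 * α₀ ^ 2)) (1 / (1 + α₀ ^ 2 * h₀))
    rw [← hκ_def] at this
    calc κ * (1 + 4 * α₀ ^ 2) ≤ (1 / (1 + 4 * α₀ ^ 2)) * (1 + 4 * α₀ ^ 2) := by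
          apply mul_le_mul_of_nonneg_right this hd1.le
      _ = 1 := by field_simp
  have hκle1 : κ ≤ 1 := by
    refine le_trans (min_le_left _ _) ?_
    rw [div_le_one hd1]
    linarith [sq_nonneg α₀]
  have hκ2 : κ ≤ 1 / (1 + α₀ ^ 2 * h₀) := min_le_right _ _
  clear_value κ
  refine ⟨κ, hκpos, ?_⟩
  intro n hn
  induction n, hn using Nat.le_induction with
  | base =>
    have : h₀ * κ ≤ h₀ / (1 + α₀ ^ 2 * h₀) := by
      have h3 := mul_le_mul_of_nonneg_left hκ2 hh₀.le
      rwa [mul_one_div] at h3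
    simpa using this.trans hω1
  | succ n hn IH =>
    have hN1 : (1:ℝ) ≤ (n:ℝ) := by exact_mod_cast hn
    have hN0 : (0:ℝ) < (n:ℝ) := by linarith
    set N : ℝ := (n:ℝ) with hN_def
    -- abbreviations
    have hA : (0:ℝ) < N ^ s := Real.rpow_pos_of_pos hN0 _
    have hB : (0:ℝ) < N ^ β := Real.rpow_pos_of_pos hN0 _
    have hE : (0:ℝ) < N ^ (2*γ - β - 2) := Real.rpow_pos_of_pos hN0 _
    have hEA : N ^ (2*γ - β - 2) * N ^ s = N ^ (γ - 1) := by
      rw [← Real.rpow_add hN0]; congr 1; rw [hs_def]; ring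
    have hEB : N ^ (2*γ - β - 2) * N ^ β = N ^ (2*γ - 2) := by
      rw [← Real.rpow_add hN0]; ring_nf
    have hC1 : N ^ (γ - 1) ≤ 1 := Real.rpow_le_one_of_one_le_of_nonpos hN1 (by linarith)
    have hD1 : N ^ (2*γ - 2) ≤ 1 := Real.rpow_le_one_of_one_le_of_nonpos hN1 (by linarith)
    have hC0 : (0:ℝ) ≤ N ^ (γ - 1) := (Real.rpow_pos_of_pos hN0 _).le
    have hD0 : (0:ℝ) ≤ N ^ (2*γ - 2) := (Real.rpow_pos_of_pos hN0 _).le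
    -- Bernoulli bound : (N+1)^s ≤ N^s + s * N^(s-1)
    have hP : (N + 1) ^ s ≤ N ^ s + s * N ^ (s - 1) := by
      have h1N : (0:ℝ) < 1 / N := by positivity
      have hber : (1 + 1/N) ^ s ≤ 1 + s * (1/N) :=
        rpow_one_add_le_one_add_mul_self (by linarith) hs0 hs1
      have hfac : (N + 1) ^ s = N ^ s * (1 + 1/N) ^ s := by
        rw [← Real.mul_rpow hN0.le (by positivity)]
        congr 1; field_simp
      calc (N + 1) ^ s = N ^ s * (1 + 1/N) ^ s := hfac
        _ ≤ N ^ s * (1 + s * (1/N)) := by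
            exact mul_le_mul_of_nonneg_left hber hA.le
        _ = N ^ s + s * (N ^ s / N) := by ring
        _ = N ^ s + s * N ^ (s - 1) := by
            rw [Real.rpow_sub hN0, Real.rpow_one]
    have hPB : (N + 1) ^ s ≤ N ^ s + N ^ β := by
      have h1 : N ^ (s - 1) ≤ N ^ β :=
        Real.rpow_le_rpow_of_exponent_le hN1 hsβ
      have h2 : s * N ^ (s-1) ≤ N ^ β := by
        have : s * N ^ (s-1) ≤ 1 * N ^ (s-1) :=
          mul_le_mul_of_nonneg_right hs1 (Real.rpow_pos_of_pos hN0 _).le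
        linarith
      linarith
    have hP2 : (N + 1) ^ s ≤ 2 * N ^ s := by
      have h1 : N ^ (s - 1) ≤ N ^ s :=
        Real.rpow_le_rpow_of_exponent_le hN1 (by linarith)
      have h2 : s * N ^ (s-1) ≤ N ^ s := by
        have : s * N ^ (s-1) ≤ 1 * N ^ (s-1) :=
          mul_le_mul_of_nonneg_right hs1 (Real.rpow_pos_of_pos hN0 _).le
        linarith
      linarith
    have hAC : N ^ s * N ^ (γ - 1) = N ^ β := by
      rw [← Real.rpow_add hN0]; congr 1; rw [hs_def]; ring
    have hAD : N ^ s * N ^ (2*γ - 2) ≤ N ^ β := by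
      rw [← Real.rpow_add hN0]
      exact Real.rpow_le_rpow_of_exponent_le hN1 (by linarith)
    -- set up quantities
    set a : ℝ := α₀ ^ 2 * h₀⁻¹ * N ^ (2*γ - β - 2) with ha_def
    have ha0 : 0 < a := by positivity
    set x : ℝ := h₀ * κ * N ^ s + h₀ * N ^ β with hx_def
    set y : ℝ := ω n + h₀ * N ^ β with hy_def
    have hx0 : 0 < x := by rw [hx_def]; positivity
    have hxy : x ≤ y := by simp only [hx_def, hy_def]; linarith [IH]
    have hy0 : 0 < y := lt_of_lt_of_le hx0 hxy
    have hax : a * x = α₀ ^ 2 * (κ * N ^ (γ - 1) + N ^ (2*γ - 2)) := by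
      have hh : h₀⁻¹ * h₀ = 1 := inv_mul_cancel₀ hh₀.ne'
      have e : α₀ ^ 2 * h₀⁻¹ * N ^ (2*γ-β-2) * (h₀ * κ * N ^ s + h₀ * N ^ β)
          = α₀ ^ 2 * (h₀⁻¹ * h₀) * (κ * (N^(2*γ-β-2) * N^s) + N^(2*γ-β-2) * N^β) := by ring
      simp only [ha_def, hx_def]
      rw [e, hh, hEA, hEB]; ring
    have hrecn : y / (1 + a * y) ≤ ω (n + 1) := by
      rw [hy_def, ha_def, hN_def]; exact hrec n hn
    clear_value a x y
    have hdx : 0 < 1 + a * x := by positivity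
    have hdy : 0 < 1 + a * y := by positivity
    -- monotonicity of t ↦ t/(1+at)
    have hmono : x / (1 + a * x) ≤ y / (1 + a * y) := by
      rw [div_le_div_iff₀ hdx hdy]
      have haxy : (0:ℝ) ≤ a * x * y := by positivity
      calc x * (1 + a * y) = x + a * x * y := by ring
        _ ≤ y + a * x * y := add_le_add_left hxy _
        _ = y * (1 + a * x) := by ring
    have hkey : h₀ * κ * (N + 1) ^ s ≤ x / (1 + a * x) := by
      rw [le_div_iff₀ hdx]
      have hP0 : (0:ℝ) ≤ (N+1)^s := (Real.rpow_pos_of_pos (by linarith) _).le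
      have e1 : h₀ * κ * (N + 1) ^ s * (1 + a * x)
          = h₀ * κ * (N + 1) ^ s + h₀ * κ * ((N+1)^s * (a * x)) := by ring
      have e2 : (N+1)^s * (a*x) ≤ 2 * N ^ s * (α₀ ^ 2 * (κ * N ^ (γ - 1) + N ^ (2*γ - 2))) := by
        rw [hax]
        apply mul_le_mul_of_nonneg_right hP2 (by positivity)
      have e3 : 2 * N ^ s * (α₀ ^ 2 * (κ * N ^ (γ - 1) + N ^ (2*γ - 2)))
          = 2 * α₀ ^ 2 * (κ * (N ^ s * N ^ (γ-1)) + N ^ s * N ^ (2*γ-2)) := by ring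
      have e4 : 2 * α₀ ^ 2 * (κ * (N ^ s * N ^ (γ-1)) + N ^ s * N ^ (2*γ-2))
          ≤ 2 * α₀ ^ 2 * (κ * N ^ β + N ^ β) := by
        apply mul_le_mul_of_nonneg_left _ (by positivity)
        rw [hAC]
        linarith [hAD]
      have e5 : (N+1)^s * (a*x) ≤ 2 * α₀ ^ 2 * (κ + 1) * N ^ β := by
        have h := e2
        rw [e3] at h
        refine le_trans (le_trans h e4) (le_of_eq (by ring))
      have e6 : h₀ * κ * (N + 1) ^ s ≤ h₀ * κ * (N ^ s + N ^ β) := by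
        apply mul_le_mul_of_nonneg_left hPB (by positivity)
      -- combine
      have hfin : h₀ * κ * (N ^ s + N ^ β) + h₀ * κ * (2 * α₀ ^ 2 * (κ + 1) * N ^ β) ≤ x := by
        have hk : κ * (1 + 2 * α₀ ^ 2 * (κ + 1)) ≤ 1 := by
          have h6 : 0 ≤ 2 * α₀ ^ 2 * κ * (1 - κ) :=
            mul_nonneg (by positivity) (by linarith)
          have h7 : κ * (1 + 2 * α₀ ^ 2 * (κ + 1))
              = κ * (1 + 4 * α₀ ^ 2) - 2 * α₀ ^ 2 * κ * (1 - κ) := by ring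
          linarith [hκ1]
        have h5 : κ * (1 + 2 * α₀ ^ 2 * (κ + 1)) * (h₀ * N ^ β) ≤ 1 * (h₀ * N ^ β) :=
          mul_le_mul_of_nonneg_right hk (by positivity)
        rw [hx_def]
        have h6 : h₀ * κ * (N ^ s + N ^ β) + h₀ * κ * (2 * α₀ ^ 2 * (κ + 1) * N ^ β)
            = h₀ * κ * N ^ s + κ * (1 + 2 * α₀ ^ 2 * (κ + 1)) * (h₀ * N ^ β) := by ring
        rw [h6]
        have h7 : (1:ℝ) * (h₀ * N ^ β) = h₀ * N ^ β := one_mul _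
        linarith [h5]
      calc h₀ * κ * (N + 1) ^ s * (1 + a * x)
          = h₀ * κ * (N + 1) ^ s + h₀ * κ * ((N+1)^s * (a * x)) := e1
        _ ≤ h₀ * κ * (N ^ s + N ^ β) + h₀ * κ * (2 * α₀ ^ 2 * (κ + 1) * N ^ β) := by
            have := mul_le_mul_of_nonneg_left e5 (by positivity : (0:ℝ) ≤ h₀ * κ)
            linarith
        _ ≤ x := hfin
    have hcast : ((n+1:ℕ):ℝ) = N + 1 := by push_cast [hN_def]; ring
    rw [hcast]
    calc h₀ * κ * (N + 1) ^ s ≤ x / (1 + a * x) := hkey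
      _ ≤ y / (1 + a * y) := hmono
      _ ≤ ω (n+1) := hrecn
end

section
/- Let h_0, α_0, κ, M > 0 and let the parameters satisfy 0 ≤ γ ≤ 1 and γ − 1 ≤ β ≤ γ. Define h_n = h_0 n^β for n ≥ 1. Suppose (c_n)_{n≥1} and (ω_n)_{n≥1} are sequences of positive reals with c_1 ≥ α_0² h_0^{−1}, ω_n ≥ h_0 κ n^{1+β−γ} for all n ≥ 1, and c_{n+1} ≥ c_n/(1 + M h_n/ω_n) + α_0² h_0^{−1} n^{2γ−β−2} for all n ≥ 1. Then there exists η > 0 such that c_n ≥ η n^{γ−β−1} for all n ≥ 1. -/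
/-- Lemma: lower bound for the recursive covariance sequence `cₙ`. -/
theorem covariance_sequence_lower_bound
    (h₀ α₀ κ M γ β : ℝ) (hh₀ : 0 < h₀) (hα₀ : 0 < α₀) (hκ : 0 < κ) (hM : 0 < M)
    (hγ0 : 0 ≤ γ) (hγ1 : γ ≤ 1) (hβl : γ - 1 ≤ β) (hβu : β ≤ γ)
    (c ω : ℕ → ℝ)
    (hcpos : ∀ n : ℕ, 1 ≤ n → 0 < c n) (hωpos : ∀ n : ℕ, 1 ≤ n → 0 < ω n)
    (hc1 : α₀ ^ 2 * h₀⁻¹ ≤ c 1)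
    (hω : ∀ n : ℕ, 1 ≤ n → h₀ * κ * (n : ℝ) ^ (1 + β - γ) ≤ ω n)
    (hrec : ∀ n : ℕ, 1 ≤ n →
      c n / (1 + M * (h₀ * (n : ℝ) ^ β) / ω n) +
          α₀ ^ 2 * h₀⁻¹ * (n : ℝ) ^ (2 * γ - β - 2) ≤ c (n + 1)) :
    ∃ η : ℝ, 0 < η ∧ ∀ n : ℕ, 1 ≤ n → η * (n : ℝ) ^ (γ - β - 1) ≤ c n := by
  have hApos : 0 < α₀ ^ 2 * h₀⁻¹ := by positivity
  set A := α₀ ^ 2 * h₀⁻¹ with hAdef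
  set η := min A (A * κ / M) with hηdef
  have hηpos : 0 < η := lt_min hApos (by positivity)
  have hηA : η ≤ A := min_le_left _ _
  have hηc : η * (M / κ) ≤ A := by
    have h := min_le_right A (A * κ / M)
    have heq : (A * κ / M) * (M / κ) = A := by field_simp
    calc η * (M / κ) ≤ (A * κ / M) * (M / κ) :=
          mul_le_mul_of_nonneg_right h (by positivity)
      _ = A := heq
  refine ⟨η, hηpos, ?_⟩
  intro n hn
  induction n with
  | zero => omega
  | succ k ih =>
    rcases Nat.lt_or_ge k 1 with hk | hk
    · have hk0 : k = 0 := by omega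
      subst hk0
      have h1 : η ≤ c 1 := le_trans hηA hc1
      simpa [Real.one_rpow] using h1
    · have ihk := ih hk
      have hkpos : (0:ℝ) < (k:ℝ) := by exact_mod_cast hk
      have hωk := hωpos k hk
      have hck := hcpos k hk
      set t := (k:ℝ) ^ (γ - 1) with htdef
      have htpos : 0 < t := Real.rpow_pos_of_pos hkpos _
      -- bound on M h_n / ω_n
      have hden2 : M * (h₀ * (k:ℝ) ^ β) / ω k ≤ M / κ * t := by
        have h1a : M * (h₀ * (k:ℝ) ^ β) / ω k
            ≤ M * (h₀ * (k:ℝ) ^ β) / (h₀ * κ * (k:ℝ) ^ (1 + β - γ)) := by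
          gcongr
          exact hω k hk
        have h1b : M * (h₀ * (k:ℝ) ^ β) / (h₀ * κ * (k:ℝ) ^ (1 + β - γ))
            = M / κ * t := by
          rw [htdef, show γ - 1 = β - (1 + β - γ) by ring, Real.rpow_sub hkpos]
          have h2 : (k:ℝ) ^ (1 + β - γ) ≠ 0 := ne_of_gt (Real.rpow_pos_of_pos hkpos _)
          have h3 : (k:ℝ) ^ (-1 + γ) * (k:ℝ) ^ (1 + β) = (k:ℝ) ^ β * (k:ℝ) ^ γ := by
            rw [← Real.rpow_add hkpos, ← Real.rpow_add hkpos]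
            congr 1; ring
          have h4 : (k:ℝ) ^ (β - (1 + β - γ)) = (k:ℝ) ^ (-1 + γ) := by
            congr 1; ring
          field_simp
          linear_combination (-((k:ℝ) ^ (1 + β))) * h4 - h3
        exact h1b ▸ h1a
      have hdpos : (0:ℝ) < 1 + M * (h₀ * (k:ℝ) ^ β) / ω k := by positivity
      have hdpos2 : (0:ℝ) < 1 + M / κ * t := by positivity
      -- the core inequality
      have hkey : η ≤ η / (1 + M / κ * t) + A * t := by
        rw [div_add' _ _ _ hdpos2.ne', le_div_iff₀ hdpos2]
        have h3 : η * (M / κ) * t ≤ A * t := mul_le_mul_of_nonneg_right hηc htpos.le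
        nlinarith [mul_pos (mul_pos hApos htpos) (mul_pos (div_pos hM hκ) htpos)]
      have hsplit : (k:ℝ) ^ (2 * γ - β - 2) = (k:ℝ) ^ (γ - β - 1) * t := by
        rw [htdef, ← Real.rpow_add hkpos]; ring_nf
      have hrpow_nonneg : (0:ℝ) ≤ (k:ℝ) ^ (γ - β - 1) :=
        (Real.rpow_pos_of_pos hkpos _).le
      have hcast : ((k+1:ℕ):ℝ) = (k:ℝ) + 1 := by push_cast; ring
      calc η * ((k+1:ℕ):ℝ) ^ (γ - β - 1)
          ≤ η * (k:ℝ) ^ (γ - β - 1) := by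
            rw [hcast]
            exact mul_le_mul_of_nonneg_left
              (Real.rpow_le_rpow_of_nonpos hkpos (by linarith) (by linarith)) hηpos.le
        _ = (k:ℝ) ^ (γ - β - 1) * η := mul_comm _ _
        _ ≤ (k:ℝ) ^ (γ - β - 1) * (η / (1 + M / κ * t) + A * t) :=
            mul_le_mul_of_nonneg_left hkey hrpow_nonneg
        _ = η * (k:ℝ) ^ (γ - β - 1) / (1 + M / κ * t) + A * (k:ℝ) ^ (2 * γ - β - 2) := by
            rw [hsplit]; ring
        _ ≤ c k / (1 + M / κ * t) + A * (k:ℝ) ^ (2 * γ - β - 2) := by gcongr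
        _ ≤ c k / (1 + M * (h₀ * (k:ℝ) ^ β) / ω k) + A * (k:ℝ) ^ (2 * γ - β - 2) := by
            gcongr
        _ ≤ c (k + 1) := hrec k hk
end

section
/- Let u^{(1)},…,u^{(K)} ∈ ℝ^{d_u} be an ensemble and let H : ℝ^{d_u} → ℝ^{d_y+d_u} be differentiable with second-order Taylor remainder bound ‖H(x′) − H(x) − ∇H(x)(x′−x)‖ ≤ M_2‖x′−x‖² for all x, x′. Then the sample cross-covariance satisfies ‖C^{up} − C^{uu} (∇H(m))ᵀ‖ ≤ M_2 d_u √K ‖C^{uu}‖^{3/2}, where m is the sample mean of the ensemble. -/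
open scoped BigOperators
open Matrix

noncomputable section

namespace CrossCovAux

lemma evNorm_eq {d : ℕ} (v : Fin d → ℝ) :
    evNorm v = ‖(WithLp.equiv 2 (Fin d → ℝ)).symm v‖ := by
  rw [EuclideanSpace.norm_eq]; simp [evNorm, sq_abs]

lemma evNorm_nonneg {d : ℕ} (v : Fin d → ℝ) : 0 ≤ evNorm v := Real.sqrt_nonneg _

lemma evNorm_zero {d : ℕ} : evNorm (0 : Fin d → ℝ) = 0 := by simp [evNorm]

lemma evNorm_sq {d : ℕ} (v : Fin d → ℝ) : evNorm v ^ 2 = ∑ i, v i ^ 2 :=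
  Real.sq_sqrt (Finset.sum_nonneg fun i _ => sq_nonneg _)

lemma evNorm_add_le {d : ℕ} (v w : Fin d → ℝ) : evNorm (v + w) ≤ evNorm v + evNorm w := by
  rw [evNorm_eq, evNorm_eq, evNorm_eq]; exact norm_add_le _ _

lemma evNorm_smul {d : ℕ} (c : ℝ) (v : Fin d → ℝ) : evNorm (c • v) = |c| * evNorm v := by
  rw [evNorm_eq, evNorm_eq]
  rw [show (WithLp.equiv 2 (Fin d → ℝ)).symm (c • v) = c • (WithLp.equiv 2 (Fin d → ℝ)).symm v from rfl]
  rw [norm_smul, Real.norm_eq_abs]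

lemma abs_dot_le {d : ℕ} (a b : Fin d → ℝ) : |a ⬝ᵥ b| ≤ evNorm a * evNorm b := by
  rw [evNorm_eq, evNorm_eq]
  have := abs_real_inner_le_norm ((WithLp.equiv 2 (Fin d → ℝ)).symm a) ((WithLp.equiv 2 (Fin d → ℝ)).symm b)
  simpa [PiLp.inner_apply, RCLike.inner_apply, dotProduct, mul_comm] using this

lemma dot_self_eq {d : ℕ} (v : Fin d → ℝ) : v ⬝ᵥ v = evNorm v ^ 2 := by
  rw [evNorm_sq]; simp [dotProduct, sq]

lemma abs_le_evNorm {d : ℕ} (v : Fin d → ℝ) (j : Fin d) : |v j| ≤ evNorm v := by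
  rw [← Real.sqrt_sq_eq_abs]
  exact Real.sqrt_le_sqrt (Finset.single_le_sum (fun i _ => sq_nonneg (v i)) (Finset.mem_univ j))

lemma mulVec_bound {p q : ℕ} (A : Matrix (Fin p) (Fin q) ℝ) (v : Fin q → ℝ) (hv : evNorm v ≤ 1) :
    evNorm (A.mulVec v) ≤ Real.sqrt (∑ i, evNorm (A i) ^ 2) := by
  apply Real.sqrt_le_sqrt
  apply Finset.sum_le_sum
  intro i _
  have h1 : |A.mulVec v i| ≤ evNorm (A i) * evNorm v := abs_dot_le (A i) v
  have h2 : evNorm (A i) * evNorm v ≤ evNorm (A i) := by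
    nlinarith [evNorm_nonneg (A i), evNorm_nonneg v]
  calc A.mulVec v i ^ 2 = |A.mulVec v i| ^ 2 := (sq_abs _).symm
    _ ≤ evNorm (A i) ^ 2 := by nlinarith [abs_nonneg (A.mulVec v i)]

lemma bddAbove_spSet {p q : ℕ} (A : Matrix (Fin p) (Fin q) ℝ) :
    BddAbove {r : ℝ | ∃ v : Fin q → ℝ, evNorm v ≤ 1 ∧ r = evNorm (A.mulVec v)} := by
  refine ⟨Real.sqrt (∑ i, evNorm (A i) ^ 2), ?_⟩
  rintro r ⟨v, hv, rfl⟩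
  exact mulVec_bound A v hv

lemma spNorm_nonneg {p q : ℕ} (A : Matrix (Fin p) (Fin q) ℝ) : 0 ≤ spNorm A :=
  Real.sSup_nonneg (by rintro r ⟨v, hv, rfl⟩; exact evNorm_nonneg _)

lemma spNorm_le {p q : ℕ} {A : Matrix (Fin p) (Fin q) ℝ} {c : ℝ}
    (h : ∀ v, evNorm v ≤ 1 → evNorm (A.mulVec v) ≤ c) (hc : 0 ≤ c) : spNorm A ≤ c :=
  Real.sSup_le (by rintro r ⟨v, hv, rfl⟩; exact h v hv) hc

lemma le_spNorm {p q : ℕ} (A : Matrix (Fin p) (Fin q) ℝ) (v : Fin q → ℝ) (hv : evNorm v ≤ 1) :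
    evNorm (A.mulVec v) ≤ spNorm A :=
  le_csSup (bddAbove_spSet A) ⟨v, hv, rfl⟩

lemma evNorm_mulVec_le {p q : ℕ} (A : Matrix (Fin p) (Fin q) ℝ) (v : Fin q → ℝ) :
    evNorm (A.mulVec v) ≤ spNorm A * evNorm v := by
  rcases eq_or_ne (evNorm v) 0 with h | h
  · have hv0 : v = 0 := by
      have h2 := evNorm_sq v
      rw [h] at h2
      funext j
      have : v j ^ 2 = 0 := le_antisymm (by
        calc v j ^ 2 ≤ ∑ i, v i ^ 2 := Finset.single_le_sum (fun i _ => sq_nonneg (v i)) (Finset.mem_univ j)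
          _ = 0 := by rw [← h2]; ring) (sq_nonneg _)
      exact pow_eq_zero_iff (by norm_num) |>.mp this
    simp [hv0, evNorm_zero, h]
  · have hpos : 0 < evNorm v := lt_of_le_of_ne (evNorm_nonneg v) (Ne.symm h)
    have key := le_spNorm A ((evNorm v)⁻¹ • v) (by
      rw [evNorm_smul, abs_of_nonneg (inv_nonneg.2 hpos.le), inv_mul_cancel₀ h])
    rw [Matrix.mulVec_smul, evNorm_smul, abs_of_nonneg (inv_nonneg.2 hpos.le)] at key
    calc evNorm (A.mulVec v) = (evNorm v)⁻¹ * evNorm (A.mulVec v) * evNorm v := by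
          field_simp
      _ ≤ spNorm A * evNorm v := by
          apply mul_le_mul_of_nonneg_right key hpos.le

lemma spNorm_add_le {p q : ℕ} (A B : Matrix (Fin p) (Fin q) ℝ) :
    spNorm (A + B) ≤ spNorm A + spNorm B := by
  apply spNorm_le (fun v hv => ?_) (add_nonneg (spNorm_nonneg A) (spNorm_nonneg B))
  rw [Matrix.add_mulVec]
  calc evNorm (A.mulVec v + B.mulVec v) ≤ evNorm (A.mulVec v) + evNorm (B.mulVec v) := evNorm_add_le _ _
    _ ≤ spNorm A + spNorm B := add_le_add (le_spNorm A v hv) (le_spNorm B v hv)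

lemma spNorm_zero {p q : ℕ} : spNorm (0 : Matrix (Fin p) (Fin q) ℝ) = 0 :=
  le_antisymm (spNorm_le (fun v _ => by simp [Matrix.zero_mulVec, evNorm_zero]) le_rfl) (spNorm_nonneg _)

lemma spNorm_sum_le {p q : ℕ} {ι : Type*} (s : Finset ι) (A : ι → Matrix (Fin p) (Fin q) ℝ) :
    spNorm (∑ i ∈ s, A i) ≤ ∑ i ∈ s, spNorm (A i) := by
  classical
  induction s using Finset.induction_on with
  | empty => simp [spNorm_zero]
  | insert _ _ h ih =>
    rw [Finset.sum_insert h, Finset.sum_insert h]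
    exact le_trans (spNorm_add_le _ _) (add_le_add_right ih _)

lemma spNorm_smul_le {p q : ℕ} (c : ℝ) (A : Matrix (Fin p) (Fin q) ℝ) :
    spNorm (c • A) ≤ |c| * spNorm A := by
  apply spNorm_le (fun v hv => ?_) (mul_nonneg (abs_nonneg c) (spNorm_nonneg A))
  rw [Matrix.smul_mulVec, evNorm_smul]
  exact mul_le_mul_of_nonneg_left (le_spNorm A v hv) (abs_nonneg c)

lemma spNorm_vecMulVec_le {p q : ℕ} (x : Fin p → ℝ) (y : Fin q → ℝ) :
    spNorm (Matrix.vecMulVec x y) ≤ evNorm x * evNorm y := by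
  apply spNorm_le (fun v hv => ?_) (mul_nonneg (evNorm_nonneg x) (evNorm_nonneg y))
  have h1 : (Matrix.vecMulVec x y).mulVec v = (y ⬝ᵥ v) • x := by
    ext i
    simp only [Matrix.mulVec, Matrix.vecMulVec_apply, dotProduct, Pi.smul_apply, smul_eq_mul,
      Matrix.of_apply, Finset.sum_mul]
    exact Finset.sum_congr rfl fun k _ => by ring
  rw [h1, evNorm_smul]
  calc |y ⬝ᵥ v| * evNorm x ≤ (evNorm y * evNorm v) * evNorm x :=
        mul_le_mul_of_nonneg_right (abs_dot_le y v) (evNorm_nonneg x)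
    _ ≤ (evNorm y * 1) * evNorm x := by
        apply mul_le_mul_of_nonneg_right _ (evNorm_nonneg x)
        exact mul_le_mul_of_nonneg_left hv (evNorm_nonneg y)
    _ = evNorm x * evNorm y := by ring

lemma sum_center {K d : ℕ} (u : Fin K → Fin d → ℝ) (j : Fin d) :
    ∑ i, (u i j - sMean u j) = 0 := by
  rcases Nat.eq_zero_or_pos K with h | h
  · subst h; simp
  have hK : (K : ℝ) ≠ 0 := Nat.cast_ne_zero.2 h.ne'
  have hm : sMean u j = (K : ℝ)⁻¹ * ∑ i, u i j := by
    simp [sMean, Finset.sum_apply]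
  rw [Finset.sum_sub_distrib, Finset.sum_const, hm, Finset.card_univ, Fintype.card_fin]
  rw [nsmul_eq_mul, ← mul_assoc, mul_inv_cancel₀ hK, one_mul, sub_self]

lemma sCov_apply {K p q : ℕ} (a : Fin K → Fin p → ℝ) (b : Fin K → Fin q → ℝ) (j : Fin p) (l : Fin q) :
    sCov a b j l = (K : ℝ)⁻¹ * ∑ i, (a i j - sMean a j) * (b i l - sMean b l) := by
  simp [sCov, Matrix.sum_apply]

lemma sCov_apply' {K p q : ℕ} (a : Fin K → Fin p → ℝ) (b : Fin K → Fin q → ℝ) (c : ℝ) (j : Fin p) (l : Fin q) :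
    sCov a b j l = (K : ℝ)⁻¹ * ∑ i, (a i j - sMean a j) * (b i l - c) := by
  rw [sCov_apply]
  have key : ∑ i, (a i j - sMean a j) * (b i l - sMean b l)
      - ∑ i, (a i j - sMean a j) * (b i l - c)
      = (c - sMean b l) * ∑ i, (a i j - sMean a j) := by
    rw [← Finset.sum_sub_distrib, Finset.mul_sum]
    exact Finset.sum_congr rfl fun i _ => by ring
  rw [sum_center a j, mul_zero] at key
  have heq : ∑ i, (a i j - sMean a j) * (b i l - sMean b l)
      = ∑ i, (a i j - sMean a j) * (b i l - c) := by linarith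
  rw [heq]

lemma key_identity {du p K : ℕ} (H : (Fin du → ℝ) → Fin p → ℝ) (u : Fin K → Fin du → ℝ) :
    sCov u (fun i => H (u i)) - sCov u u * (jac H (sMean u))ᵀ =
      (K : ℝ)⁻¹ • ∑ i, Matrix.vecMulVec (u i - sMean u)
        (H (u i) - H (sMean u) - (jac H (sMean u)).mulVec (u i - sMean u)) := by
  ext j l
  rw [Matrix.sub_apply, sCov_apply' u (fun i => H (u i)) (H (sMean u) l) j l, Matrix.mul_apply]
  simp only [Matrix.transpose_apply, sCov_apply, Matrix.smul_apply, Matrix.sum_apply,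
    Matrix.vecMulVec_apply, Pi.sub_apply, smul_eq_mul, Matrix.mulVec, dotProduct]
  have hA : ∑ k, ((K:ℝ)⁻¹ * ∑ i, (u i j - sMean u j) * (u i k - sMean u k)) * jac H (sMean u) l k
      = ∑ i, (K:ℝ)⁻¹ * ((u i j - sMean u j) * ∑ k, jac H (sMean u) l k * (u i k - sMean u k)) := by
    calc ∑ k, ((K:ℝ)⁻¹ * ∑ i, (u i j - sMean u j) * (u i k - sMean u k)) * jac H (sMean u) l k
        = ∑ k, ∑ i, (K:ℝ)⁻¹ * ((u i j - sMean u j) * (jac H (sMean u) l k * (u i k - sMean u k))) := by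
          refine Finset.sum_congr rfl fun k _ => ?_
          simp only [Finset.mul_sum, Finset.sum_mul]
          exact Finset.sum_congr rfl fun i _ => by ring
      _ = ∑ i, ∑ k, (K:ℝ)⁻¹ * ((u i j - sMean u j) * (jac H (sMean u) l k * (u i k - sMean u k))) :=
          Finset.sum_comm
      _ = ∑ i, (K:ℝ)⁻¹ * ((u i j - sMean u j) * ∑ k, jac H (sMean u) l k * (u i k - sMean u k)) := by
          simp only [Finset.mul_sum]
  rw [hA, Finset.mul_sum, Finset.mul_sum, ← Finset.sum_sub_distrib]
  exact Finset.sum_congr rfl fun i _ => by ring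

lemma sum_swap_mul {ι κ : Type*} [Fintype ι] [Fintype κ] (c : ℝ) (f : ι → κ → ℝ) (w : κ → ℝ) :
    ∑ k, (c * ∑ i, f i k) * w k = ∑ i, c * ∑ k, f i k * w k := by
  calc ∑ k, (c * ∑ i, f i k) * w k = ∑ k, ∑ i, c * (f i k * w k) := by
        refine Finset.sum_congr rfl fun k _ => ?_
        simp only [Finset.mul_sum, Finset.sum_mul]
        exact Finset.sum_congr rfl fun i _ => by ring
    _ = ∑ i, ∑ k, c * (f i k * w k) := Finset.sum_comm
    _ = ∑ i, c * ∑ k, f i k * w k := by simp only [Finset.mul_sum]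

lemma quad {K d : ℕ} (u : Fin K → Fin d → ℝ) (v : Fin d → ℝ) :
    v ⬝ᵥ (sCov u u).mulVec v = (K:ℝ)⁻¹ * ∑ i, (∑ k, (u i k - sMean u k) * v k) ^ 2 := by
  simp only [dotProduct, Matrix.mulVec, sCov_apply]
  have h1 : ∀ j, ∑ l, ((K:ℝ)⁻¹ * ∑ i, (u i j - sMean u j) * (u i l - sMean u l)) * v l
      = ∑ i, (K:ℝ)⁻¹ * ∑ l, ((u i j - sMean u j) * (u i l - sMean u l)) * v l :=
    fun j => sum_swap_mul _ _ _
  calc ∑ j, v j * ∑ l, ((K:ℝ)⁻¹ * ∑ i, (u i j - sMean u j) * (u i l - sMean u l)) * v l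
      = ∑ j, v j * ∑ i, (K:ℝ)⁻¹ * ∑ l, ((u i j - sMean u j) * (u i l - sMean u l)) * v l := by
        exact Finset.sum_congr rfl fun j _ => by rw [h1 j]
    _ = ∑ j, ∑ i, v j * ((K:ℝ)⁻¹ * ∑ l, ((u i j - sMean u j) * (u i l - sMean u l)) * v l) := by
        simp only [Finset.mul_sum]
    _ = ∑ i, ∑ j, v j * ((K:ℝ)⁻¹ * ∑ l, ((u i j - sMean u j) * (u i l - sMean u l)) * v l) :=
        Finset.sum_comm
    _ = (K:ℝ)⁻¹ * ∑ i, (∑ k, (u i k - sMean u k) * v k) ^ 2 := by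
        rw [Finset.mul_sum]
        refine Finset.sum_congr rfl fun i _ => ?_
        rw [sq, Finset.sum_mul_sum]
        simp only [Finset.mul_sum, Finset.sum_mul]
        rw [Finset.sum_comm]
        refine Finset.sum_congr rfl fun j _ => Finset.sum_congr rfl fun l _ => by ring

end CrossCovAux

namespace CrossCovAux

lemma evNorm_single {d : ℕ} (j : Fin d) : evNorm (Pi.single j (1:ℝ) : Fin d → ℝ) = 1 := by
  have h : ∑ k : Fin d, ((Pi.single j (1:ℝ) : Fin d → ℝ) k) ^ 2 = (1:ℝ) := by
    have : ∀ k : Fin d, ((Pi.single j (1:ℝ) : Fin d → ℝ) k) ^ 2 = if k = j then (1:ℝ) else 0 := by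
      intro k; by_cases h : k = j <;> simp [Pi.single_apply, h]
    rw [Finset.sum_congr rfl fun k _ => this k, Finset.sum_ite_eq' Finset.univ j fun _ => (1:ℝ)]
    simp
  rw [evNorm, h, Real.sqrt_one]

lemma diag_le_spNorm {K d : ℕ} (u : Fin K → Fin d → ℝ) (j : Fin d) :
    sCov u u j j ≤ spNorm (sCov u u) := by
  set C := sCov u u
  have hmv : C.mulVec (Pi.single j (1:ℝ)) j = C j j := by
    simp [Matrix.mulVec, dotProduct, Pi.single_apply, mul_ite]
  calc C j j ≤ |C.mulVec (Pi.single j (1:ℝ)) j| := by rw [hmv]; exact le_abs_self _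
    _ ≤ evNorm (C.mulVec (Pi.single j 1)) := abs_le_evNorm _ j
    _ ≤ spNorm C := le_spNorm C _ (le_of_eq (evNorm_single j))

lemma trace_bound {K d : ℕ} (u : Fin K → Fin d → ℝ) :
    (K:ℝ)⁻¹ * ∑ i, evNorm (u i - sMean u) ^ 2 ≤ d * spNorm (sCov u u) := by
  have htr : (K:ℝ)⁻¹ * ∑ i, evNorm (u i - sMean u) ^ 2 = ∑ j, sCov u u j j := by
    simp only [sCov_apply, evNorm_sq, Pi.sub_apply]
    rw [← Finset.mul_sum, Finset.sum_comm]
    congr 1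
    exact Finset.sum_congr rfl fun i _ => Finset.sum_congr rfl fun j _ => by ring
  rw [htr]
  calc ∑ j, sCov u u j j ≤ ∑ _j : Fin d, spNorm (sCov u u) :=
        Finset.sum_le_sum fun j _ => diag_le_spNorm u j
    _ = d * spNorm (sCov u u) := by simp [mul_comm]

lemma enorm_sq_le {K d : ℕ} (u : Fin K → Fin d → ℝ) (i : Fin K) :
    evNorm (u i - sMean u) ^ 2 ≤ K * spNorm (sCov u u) := by
  have hK0 : K ≠ 0 := by rintro rfl; exact i.elim0
  have hK : 0 < (K:ℝ) := by exact_mod_cast Nat.pos_of_ne_zero hK0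
  set n := evNorm (u i - sMean u) with hn
  have hs := spNorm_nonneg (sCov u u)
  rcases eq_or_ne n 0 with h | h
  · rw [h]; simpa using mul_nonneg (Nat.cast_nonneg K) hs
  have hpos : 0 < n := lt_of_le_of_ne (evNorm_nonneg _) (Ne.symm h)
  set v : Fin d → ℝ := n⁻¹ • (u i - sMean u) with hv
  have hvnorm : evNorm v = 1 := by
    rw [hv, evNorm_smul, abs_of_nonneg (inv_nonneg.2 hpos.le), ← hn, inv_mul_cancel₀ h]
  have hq := quad u v
  have hsum : ∑ k, (u i k - sMean u k) * v k = n := by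
    have : ∀ k, (u i k - sMean u k) * v k = n⁻¹ * (u i k - sMean u k) ^ 2 := by
      intro k; simp only [hv, Pi.smul_apply, Pi.sub_apply, smul_eq_mul]; ring
    rw [Finset.sum_congr rfl fun k _ => this k, ← Finset.mul_sum]
    have h2 : ∑ k, (u i k - sMean u k) ^ 2 = n ^ 2 := by
      rw [hn, evNorm_sq]; exact Finset.sum_congr rfl fun k _ => by simp [Pi.sub_apply]
    rw [h2, sq]
    field_simp
  have hterm : (K:ℝ)⁻¹ * n ^ 2 ≤ v ⬝ᵥ (sCov u u).mulVec v := by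
    rw [hq]
    apply mul_le_mul_of_nonneg_left _ (inv_nonneg.2 hK.le)
    calc n ^ 2 = (∑ k, (u i k - sMean u k) * v k) ^ 2 := by rw [hsum]
      _ ≤ ∑ i', (∑ k, (u i' k - sMean u k) * v k) ^ 2 :=
        Finset.single_le_sum (f := fun i' => (∑ k, (u i' k - sMean u k) * v k) ^ 2)
          (fun i' _ => sq_nonneg _) (Finset.mem_univ i)
  have hqle : v ⬝ᵥ (sCov u u).mulVec v ≤ spNorm (sCov u u) := by
    calc v ⬝ᵥ (sCov u u).mulVec v ≤ |v ⬝ᵥ (sCov u u).mulVec v| := le_abs_self _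
      _ ≤ evNorm v * evNorm ((sCov u u).mulVec v) := abs_dot_le _ _
      _ = evNorm ((sCov u u).mulVec v) := by rw [hvnorm, one_mul]
      _ ≤ spNorm (sCov u u) * evNorm v := evNorm_mulVec_le _ _
      _ = spNorm (sCov u u) := by rw [hvnorm, mul_one]
  have := le_trans hterm hqle
  calc n ^ 2 = (K:ℝ) * ((K:ℝ)⁻¹ * n ^ 2) := by field_simp
    _ ≤ (K:ℝ) * spNorm (sCov u u) := mul_le_mul_of_nonneg_left this hK.le

lemma rpow_three_halves {s : ℝ} (hs : 0 ≤ s) : s ^ ((3:ℝ)/2) = s * Real.sqrt s := by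
  rcases eq_or_lt_of_le hs with h | h
  · rw [← h]; rw [Real.zero_rpow (by norm_num)]; simp
  · rw [show (3:ℝ)/2 = 1 + 1/2 by norm_num, Real.rpow_add h, Real.rpow_one,
      ← Real.sqrt_eq_rpow]

end CrossCovAux

/-- Lemma: the sample cross-covariance is close to `Cᵘᵘ Jᵀ`. -/
theorem cross_covariance_linearization
    {du dy K : ℕ}
    (H : (Fin du → ℝ) → Fin (dy + du) → ℝ)
    (hdiff : Differentiable ℝ H)
    (M₂ : ℝ)
    (hTay : ∀ x x',
      evNorm (H x' - H x - (jac H x).mulVec (x' - x)) ≤ M₂ * evNorm (x' - x) ^ 2)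
    (u : Fin K → Fin du → ℝ) :
    spNorm (sCov u (fun i => H (u i)) - sCov u u * (jac H (sMean u))ᵀ) ≤
      M₂ * du * Real.sqrt K * spNorm (sCov u u) ^ ((3 : ℝ) / 2) := by
  rcases Nat.eq_zero_or_pos du with hdu | hdu
  · subst hdu
    have hz : spNorm (sCov u (fun i => H (u i)) - sCov u u * (jac H (sMean u))ᵀ) ≤ 0 := by
      apply CrossCovAux.spNorm_le (fun v hv => ?_) le_rfl
      have h0 : evNorm ((sCov u (fun i => H (u i)) - sCov u u * (jac H (sMean u))ᵀ).mulVec v) = 0 := by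
        simp [evNorm]
      rw [h0]
    refine le_trans hz ?_
    simp
  · have hM : 0 ≤ M₂ := by
      have h0 := hTay 0 (Pi.single ⟨0, hdu⟩ (1:ℝ))
      have h1 : evNorm ((Pi.single ⟨0, hdu⟩ (1:ℝ) : Fin du → ℝ) - 0) = 1 := by
        rw [sub_zero]; exact CrossCovAux.evNorm_single _
      rw [h1] at h0
      simpa using le_trans (CrossCovAux.evNorm_nonneg _) h0
    have hs : 0 ≤ spNorm (sCov u u) := CrossCovAux.spNorm_nonneg _
    have hKc : (0:ℝ) ≤ (K:ℝ)⁻¹ := inv_nonneg.2 (Nat.cast_nonneg K)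
    rw [CrossCovAux.key_identity H u]
    calc spNorm ((K:ℝ)⁻¹ • ∑ i, Matrix.vecMulVec (u i - sMean u)
            (H (u i) - H (sMean u) - (jac H (sMean u)).mulVec (u i - sMean u)))
        ≤ |(K:ℝ)⁻¹| * spNorm (∑ i, Matrix.vecMulVec (u i - sMean u)
            (H (u i) - H (sMean u) - (jac H (sMean u)).mulVec (u i - sMean u))) :=
          CrossCovAux.spNorm_smul_le _ _
      _ = (K:ℝ)⁻¹ * spNorm (∑ i, Matrix.vecMulVec (u i - sMean u)
            (H (u i) - H (sMean u) - (jac H (sMean u)).mulVec (u i - sMean u))) := by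
          rw [abs_of_nonneg hKc]
      _ ≤ (K:ℝ)⁻¹ * ∑ i, spNorm (Matrix.vecMulVec (u i - sMean u)
            (H (u i) - H (sMean u) - (jac H (sMean u)).mulVec (u i - sMean u))) :=
          mul_le_mul_of_nonneg_left (CrossCovAux.spNorm_sum_le _ _) hKc
      _ ≤ (K:ℝ)⁻¹ * ∑ i, Real.sqrt ((K:ℝ) * spNorm (sCov u u)) *
            (M₂ * evNorm (u i - sMean u) ^ 2) := by
          apply mul_le_mul_of_nonneg_left _ hKc
          apply Finset.sum_le_sum
          intro i _
          have h1 := CrossCovAux.spNorm_vecMulVec_le (u i - sMean u)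
            (H (u i) - H (sMean u) - (jac H (sMean u)).mulVec (u i - sMean u))
          have h2 : evNorm (u i - sMean u) ≤ Real.sqrt ((K:ℝ) * spNorm (sCov u u)) := by
            calc evNorm (u i - sMean u)
                = Real.sqrt (evNorm (u i - sMean u) ^ 2) :=
                  (Real.sqrt_sq (CrossCovAux.evNorm_nonneg _)).symm
              _ ≤ Real.sqrt ((K:ℝ) * spNorm (sCov u u)) :=
                  Real.sqrt_le_sqrt (CrossCovAux.enorm_sq_le u i)
          have h3 : evNorm (H (u i) - H (sMean u) - (jac H (sMean u)).mulVec (u i - sMean u))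
              ≤ M₂ * evNorm (u i - sMean u) ^ 2 := hTay (sMean u) (u i)
          exact le_trans h1 (mul_le_mul h2 h3 (CrossCovAux.evNorm_nonneg _) (Real.sqrt_nonneg _))
      _ = (Real.sqrt ((K:ℝ) * spNorm (sCov u u)) * M₂) *
            ((K:ℝ)⁻¹ * ∑ i, evNorm (u i - sMean u) ^ 2) := by
          simp only [← Finset.mul_sum]; ring
      _ ≤ (Real.sqrt ((K:ℝ) * spNorm (sCov u u)) * M₂) * ((du:ℝ) * spNorm (sCov u u)) :=
          mul_le_mul_of_nonneg_left (CrossCovAux.trace_bound u)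
            (mul_nonneg (Real.sqrt_nonneg _) hM)
      _ = M₂ * du * Real.sqrt K * spNorm (sCov u u) ^ ((3:ℝ)/2) := by
          rw [Real.sqrt_mul (Nat.cast_nonneg K), CrossCovAux.rpow_three_halves hs]
          ring
end
end

section
/- Let u^{(1)},…,u^{(K)} ∈ ℝ^{d_u} be an ensemble with sample mean m, let H : ℝ^{d_u} → ℝ^{d_y+d_u} be differentiable with ‖H(x′) − H(x) − ∇H(x)(x′−x)‖ ≤ M_2‖x′−x‖² for all x, x′, and define the linearization residuals r^{(i)} = H(u^{(i)}) − H(m) − ∇H(m)(u^{(i)} − m) with mean r̄ = (1/K)∑_i r^{(i)} and sample covariance C^{rr} = (1/K)∑_i (r^{(i)} − r̄)(r^{(i)} − r̄)ᵀ. Then ‖C^{rr}‖ ≤ tr(C^{rr}) ≤ M_2² K d_u² ‖C^{uu}‖². -/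
open scoped BigOperators
open Matrix

noncomputable section

-- helpers
lemma evNorm_nonneg' {d : ℕ} (v : Fin d → ℝ) : 0 ≤ evNorm v := Real.sqrt_nonneg _

lemma sq_evNorm {d : ℕ} (v : Fin d → ℝ) : evNorm v ^ 2 = ∑ i, v i ^ 2 :=
  Real.sq_sqrt (Finset.sum_nonneg fun i _ => sq_nonneg _)

lemma sMean_apply {K d : ℕ} (u : Fin K → Fin d → ℝ) (j : Fin d) :
    sMean u j = (K : ℝ)⁻¹ * ∑ i, u i j := by
  simp [sMean, Finset.sum_apply]

lemma sCov_apply {K p q : ℕ} (a : Fin K → Fin p → ℝ) (b : Fin K → Fin q → ℝ)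
    (j : Fin p) (l : Fin q) :
    sCov a b j l = (K : ℝ)⁻¹ * ∑ i, (a i j - sMean a j) * (b i l - sMean b l) := by
  simp [sCov, Matrix.sum_apply]

lemma trace_sCov {K d : ℕ} (r : Fin K → Fin d → ℝ) :
    Matrix.trace (sCov r r) = (K : ℝ)⁻¹ * ∑ j, ∑ i, (r i j - sMean r j) ^ 2 := by
  rw [Matrix.trace, Finset.mul_sum]
  refine Finset.sum_congr rfl fun j _ => ?_
  rw [Matrix.diag_apply, sCov_apply]
  congr 1
  exact Finset.sum_congr rfl fun i _ => by ring

lemma spNorm_le {p q : ℕ} (A : Matrix (Fin p) (Fin q) ℝ) {c : ℝ} (hc : 0 ≤ c)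
    (h : ∀ v : Fin q → ℝ, evNorm v ≤ 1 → evNorm (A.mulVec v) ≤ c) : spNorm A ≤ c := by
  apply Real.sSup_le _ hc
  rintro r ⟨v, hv, rfl⟩
  exact h v hv

lemma evNorm_mulVec_le {p q : ℕ} (A : Matrix (Fin p) (Fin q) ℝ) (v : Fin q → ℝ)
    (hv : evNorm v ≤ 1) :
    evNorm (A.mulVec v) ≤ Real.sqrt (∑ j, ∑ l, A j l ^ 2) := by
  apply Real.sqrt_le_sqrt
  have hv2 : ∑ l, v l ^ 2 ≤ 1 := by
    have := sq_evNorm v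
    nlinarith [evNorm_nonneg' v]
  refine Finset.sum_le_sum fun j _ => ?_
  calc (A.mulVec v j) ^ 2 = (∑ l, A j l * v l) ^ 2 := by rw [Matrix.mulVec, dotProduct]
    _ ≤ (∑ l, A j l ^ 2) * ∑ l, v l ^ 2 := Finset.sum_mul_sq_le_sq_mul_sq _ _ _
    _ ≤ (∑ l, A j l ^ 2) * 1 := by
        refine mul_le_mul_of_nonneg_left hv2 (Finset.sum_nonneg fun _ _ => sq_nonneg _)
    _ = ∑ l, A j l ^ 2 := mul_one _

lemma bddAbove_spSet {p q : ℕ} (A : Matrix (Fin p) (Fin q) ℝ) :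
    BddAbove {r : ℝ | ∃ v : Fin q → ℝ, evNorm v ≤ 1 ∧ r = evNorm (A.mulVec v)} := by
  refine ⟨Real.sqrt (∑ j, ∑ l, A j l ^ 2), ?_⟩
  rintro r ⟨v, hv, rfl⟩
  exact evNorm_mulVec_le A v hv

lemma diag_le_spNorm {d : ℕ} (A : Matrix (Fin d) (Fin d) ℝ) (j : Fin d) :
    A j j ≤ spNorm A := by
  have hmem : evNorm (A.mulVec (Pi.single j 1)) ∈
      {r : ℝ | ∃ v : Fin d → ℝ, evNorm v ≤ 1 ∧ r = evNorm (A.mulVec v)} := by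
    refine ⟨Pi.single j 1, ?_, rfl⟩
    have : evNorm (Pi.single j 1 : Fin d → ℝ) = 1 := by
      simp only [evNorm]
      rw [show (∑ i, (Pi.single j 1 : Fin d → ℝ) i ^ 2) = 1 by simp [Pi.single_apply]]
      exact Real.sqrt_one
    rw [this]
  have h1 : A j j ≤ evNorm (A.mulVec (Pi.single j 1)) := by
    have hval : A.mulVec (Pi.single j 1) j = A j j := by
      simp [Matrix.mulVec_single]
    calc A j j ≤ |A.mulVec (Pi.single j 1) j| := by rw [hval]; exact le_abs_self _
      _ = Real.sqrt ((A.mulVec (Pi.single j 1) j) ^ 2) := (Real.sqrt_sq_eq_abs _).symm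
      _ ≤ evNorm (A.mulVec (Pi.single j 1)) := by
          apply Real.sqrt_le_sqrt
          exact Finset.single_le_sum (f := fun i => (A.mulVec (Pi.single j 1) i) ^ 2)
            (fun i _ => sq_nonneg _) (Finset.mem_univ j)
  exact h1.trans (le_csSup (bddAbove_spSet A) hmem)

lemma var_le {K : ℕ} (a : Fin K → ℝ) :
    ∑ i, (a i - (K : ℝ)⁻¹ * ∑ k, a k) ^ 2 ≤ ∑ i, a i ^ 2 := by
  rcases Nat.eq_zero_or_pos K with hK | hK
  · subst hK; simp
  have hKne : (K : ℝ) ≠ 0 := Nat.cast_ne_zero.mpr hK.ne'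
  set S := ∑ k, a k with hS
  set m := (K : ℝ)⁻¹ * S with hm
  have key : ∑ i, a i ^ 2 - ∑ i, (a i - m) ^ 2 = (K : ℝ)⁻¹ * S ^ 2 := by
    rw [← Finset.sum_sub_distrib]
    have h1 : ∀ i : Fin K, a i ^ 2 - (a i - m) ^ 2 = (2 * m) * a i - m ^ 2 := fun i => by ring
    rw [Finset.sum_congr rfl fun i _ => h1 i, Finset.sum_sub_distrib, ← Finset.mul_sum,
        Finset.sum_const, Finset.card_univ, Fintype.card_fin, nsmul_eq_mul, ← hS, hm]
    field_simp
    ring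
  nlinarith [inv_nonneg.mpr (le_of_lt (by exact_mod_cast hK : (0:ℝ) < K)), sq_nonneg S,
    mul_nonneg (inv_nonneg.mpr (le_of_lt (by exact_mod_cast hK : (0:ℝ) < K))) (sq_nonneg S)]

-- Part 1 generic
lemma part1 {K d : ℕ} (r : Fin K → Fin d → ℝ) :
    spNorm (sCov r r) ≤ Matrix.trace (sCov r r) := by
  set C := sCov r r with hC
  have hdiag : ∀ j, 0 ≤ C j j := by
    intro j
    rw [hC, sCov_apply]
    exact mul_nonneg (inv_nonneg.mpr (Nat.cast_nonneg _))
      (Finset.sum_nonneg fun i _ => mul_self_nonneg _)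
  have htr : 0 ≤ Matrix.trace C := Finset.sum_nonneg fun j _ => hdiag j
  have hCS : ∀ j l, C j l ^ 2 ≤ C j j * C l l := by
    intro j l
    rw [hC, sCov_apply, sCov_apply, sCov_apply]
    rw [mul_pow]
    have h2 := Finset.sum_mul_sq_le_sq_mul_sq Finset.univ
      (fun i => r i j - sMean r j) (fun i => r i l - sMean r l)
    have hκ : (0:ℝ) ≤ (K : ℝ)⁻¹ := inv_nonneg.mpr (Nat.cast_nonneg _)
    calc ((K:ℝ)⁻¹)^2 * (∑ i, (r i j - sMean r j) * (r i l - sMean r l))^2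
        ≤ ((K:ℝ)⁻¹)^2 * ((∑ i, (r i j - sMean r j)^2) * ∑ i, (r i l - sMean r l)^2) := by
          exact mul_le_mul_of_nonneg_left h2 (sq_nonneg _)
      _ = ((K:ℝ)⁻¹ * ∑ i, (r i j - sMean r j) * (r i j - sMean r j)) *
          ((K:ℝ)⁻¹ * ∑ i, (r i l - sMean r l) * (r i l - sMean r l)) := by
          simp only [← sq]; ring
  apply spNorm_le _ htr
  intro v hv
  have hv2 : ∑ l, v l ^ 2 ≤ 1 := by
    have := sq_evNorm v
    nlinarith [evNorm_nonneg' v]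
  have h1 : ∑ j, (C.mulVec v j) ^ 2 ≤ (Matrix.trace C) ^ 2 := by
    calc ∑ j, (C.mulVec v j) ^ 2 ≤ ∑ j, ∑ l, C j l ^ 2 := by
          refine Finset.sum_le_sum fun j _ => ?_
          calc (C.mulVec v j) ^ 2 = (∑ l, C j l * v l) ^ 2 := by rw [Matrix.mulVec, dotProduct]
            _ ≤ (∑ l, C j l ^ 2) * ∑ l, v l ^ 2 := Finset.sum_mul_sq_le_sq_mul_sq _ _ _
            _ ≤ (∑ l, C j l ^ 2) * 1 :=
                mul_le_mul_of_nonneg_left hv2 (Finset.sum_nonneg fun _ _ => sq_nonneg _)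
            _ = ∑ l, C j l ^ 2 := mul_one _
      _ ≤ ∑ j, ∑ l, C j j * C l l :=
          Finset.sum_le_sum fun j _ => Finset.sum_le_sum fun l _ => hCS j l
      _ = (∑ j, C j j) * (∑ l, C l l) := by rw [← Finset.sum_mul_sum]
      _ = (Matrix.trace C) ^ 2 := by rw [Matrix.trace]; simp [sq, Matrix.diag]
  calc evNorm (C.mulVec v) = Real.sqrt (∑ j, (C.mulVec v j) ^ 2) := rfl
    _ ≤ Real.sqrt ((Matrix.trace C) ^ 2) := Real.sqrt_le_sqrt h1
    _ = |Matrix.trace C| := Real.sqrt_sq_eq_abs _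
    _ = Matrix.trace C := abs_of_nonneg htr

lemma sum_sq_dev_le {K d : ℕ} (u : Fin K → Fin d → ℝ) :
    ∑ i, ∑ j, (u i j - sMean u j) ^ 2 ≤ (K : ℝ) * d * spNorm (sCov u u) := by
  rcases Nat.eq_zero_or_pos K with hK | hK
  · subst hK; simp
  have hKne : (K : ℝ) ≠ 0 := Nat.cast_ne_zero.mpr hK.ne'
  have h1 : ∑ i, ∑ j, (u i j - sMean u j) ^ 2 = (K : ℝ) * Matrix.trace (sCov u u) := by
    rw [trace_sCov, Finset.sum_comm]
    field_simp
  rw [h1, mul_assoc]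
  refine mul_le_mul_of_nonneg_left ?_ (Nat.cast_nonneg _)
  calc Matrix.trace (sCov u u) = ∑ j, (sCov u u) j j := by rw [Matrix.trace]; rfl
    _ ≤ ∑ _j : Fin d, spNorm (sCov u u) :=
        Finset.sum_le_sum fun j _ => diag_le_spNorm _ j
    _ = (d : ℝ) * spNorm (sCov u u) := by
        rw [Finset.sum_const, Finset.card_univ, Fintype.card_fin, nsmul_eq_mul]

lemma trace_le_second_moment {K d : ℕ} (r : Fin K → Fin d → ℝ) :
    Matrix.trace (sCov r r) ≤ (K : ℝ)⁻¹ * ∑ i, evNorm (r i) ^ 2 := by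
  rw [trace_sCov]
  refine mul_le_mul_of_nonneg_left ?_ (inv_nonneg.mpr (Nat.cast_nonneg _))
  calc ∑ j, ∑ i, (r i j - sMean r j) ^ 2
      ≤ ∑ j, ∑ i, (r i j) ^ 2 := by
        refine Finset.sum_le_sum fun j _ => ?_
        have h := var_le (fun i => r i j)
        simpa [sMean_apply] using h
    _ = ∑ i, evNorm (r i) ^ 2 := by
        rw [Finset.sum_comm]
        exact Finset.sum_congr rfl fun i _ => (sq_evNorm (r i)).symm

lemma residual_aux
    {du dy K : ℕ}
    (H : (Fin du → ℝ) → Fin (dy + du) → ℝ)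
    (M₂ : ℝ)
    (jacH : (Fin du → ℝ) → Matrix (Fin (dy+du)) (Fin du) ℝ)
    (hTay : ∀ x x',
      evNorm (H x' - H x - (jacH x).mulVec (x' - x)) ≤ M₂ * evNorm (x' - x) ^ 2)
    (u : Fin K → Fin du → ℝ) :
    spNorm (sCov (fun i => H (u i) - H (sMean u) - (jacH (sMean u)).mulVec (u i - sMean u))
            (fun i => H (u i) - H (sMean u) - (jacH (sMean u)).mulVec (u i - sMean u))) ≤
      Matrix.trace
        (sCov (fun i => H (u i) - H (sMean u) - (jacH (sMean u)).mulVec (u i - sMean u))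
          (fun i => H (u i) - H (sMean u) - (jacH (sMean u)).mulVec (u i - sMean u))) ∧
    Matrix.trace
        (sCov (fun i => H (u i) - H (sMean u) - (jacH (sMean u)).mulVec (u i - sMean u))
          (fun i => H (u i) - H (sMean u) - (jacH (sMean u)).mulVec (u i - sMean u))) ≤
      M₂ ^ 2 * K * du ^ 2 * spNorm (sCov u u) ^ 2 := by
  set m := sMean u with hm
  set r : Fin K → Fin (dy + du) → ℝ :=
    fun i => H (u i) - H m - (jacH m).mulVec (u i - m) with hr
  refine ⟨part1 r, ?_⟩
  have hκ : (0:ℝ) ≤ (K : ℝ)⁻¹ := inv_nonneg.mpr (Nat.cast_nonneg _)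
  set q : Fin K → ℝ := fun i => ∑ j, (u i j - m j) ^ 2 with hqdef
  have hq : ∀ i, evNorm (u i - m) ^ 2 = q i := fun i => by
    rw [sq_evNorm]; rfl
  have hqnn : ∀ i, 0 ≤ q i := fun i => Finset.sum_nonneg fun j _ => sq_nonneg _
  have hri : ∀ i, evNorm (r i) ^ 2 ≤ M₂ ^ 2 * q i ^ 2 := by
    intro i
    have h := hTay m (u i)
    rw [hq i] at h
    have h0 := evNorm_nonneg' (r i)
    nlinarith
  have h3 : ∑ i, evNorm (r i) ^ 2 ≤ M₂ ^ 2 * ∑ i, q i ^ 2 := by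
    rw [Finset.mul_sum]
    exact Finset.sum_le_sum fun i _ => hri i
  have h4 : ∑ i, q i ^ 2 ≤ (∑ i, q i) ^ 2 :=
    Finset.sum_sq_le_sq_sum_of_nonneg fun i _ => hqnn i
  have h5 : ∑ i, q i ≤ (K : ℝ) * du * spNorm (sCov u u) := sum_sq_dev_le u
  have h6 : (∑ i, q i) ^ 2 ≤ ((K : ℝ) * du * spNorm (sCov u u)) ^ 2 := by
    have := Finset.sum_nonneg fun i (_ : i ∈ Finset.univ) => hqnn i
    nlinarith
  have hKK : (K : ℝ)⁻¹ * (K : ℝ) ^ 2 = (K : ℝ) := by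
    rcases Nat.eq_zero_or_pos K with hK | hK
    · subst hK; simp
    · have hKne : (K : ℝ) ≠ 0 := Nat.cast_ne_zero.mpr hK.ne'
      field_simp
  calc Matrix.trace (sCov r r) ≤ (K : ℝ)⁻¹ * ∑ i, evNorm (r i) ^ 2 :=
        trace_le_second_moment r
    _ ≤ (K : ℝ)⁻¹ * (M₂ ^ 2 * ∑ i, q i ^ 2) := mul_le_mul_of_nonneg_left h3 hκ
    _ ≤ (K : ℝ)⁻¹ * (M₂ ^ 2 * (∑ i, q i) ^ 2) :=
        mul_le_mul_of_nonneg_left (mul_le_mul_of_nonneg_left h4 (sq_nonneg _)) hκ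
    _ ≤ (K : ℝ)⁻¹ * (M₂ ^ 2 * ((K : ℝ) * du * spNorm (sCov u u)) ^ 2) :=
        mul_le_mul_of_nonneg_left (mul_le_mul_of_nonneg_left h6 (sq_nonneg _)) hκ
    _ = M₂ ^ 2 * K * du ^ 2 * spNorm (sCov u u) ^ 2 := by
        rw [mul_pow, mul_pow]
        calc (K:ℝ)⁻¹ * (M₂^2 * ((K:ℝ)^2 * (du:ℝ)^2 * spNorm (sCov u u)^2))
            = ((K:ℝ)⁻¹ * (K:ℝ)^2) * (M₂^2 * (du:ℝ)^2 * spNorm (sCov u u)^2) := by ring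
          _ = M₂ ^ 2 * K * du ^ 2 * spNorm (sCov u u) ^ 2 := by rw [hKK]; ring


/-- Lemma: bound on the sample covariance of the linearization residuals. -/
theorem residual_covariance_bound
    {du dy K : ℕ}
    (H : (Fin du → ℝ) → Fin (dy + du) → ℝ)
    (hdiff : Differentiable ℝ H)
    (M₂ : ℝ)
    (hTay : ∀ x x',
      evNorm (H x' - H x - (jac H x).mulVec (x' - x)) ≤ M₂ * evNorm (x' - x) ^ 2)
    (u : Fin K → Fin du → ℝ) :
    spNorm (sCov (fun i => H (u i) - H (sMean u) - (jac H (sMean u)).mulVec (u i - sMean u))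
            (fun i => H (u i) - H (sMean u) - (jac H (sMean u)).mulVec (u i - sMean u))) ≤
      Matrix.trace
        (sCov (fun i => H (u i) - H (sMean u) - (jac H (sMean u)).mulVec (u i - sMean u))
          (fun i => H (u i) - H (sMean u) - (jac H (sMean u)).mulVec (u i - sMean u))) ∧
    Matrix.trace
        (sCov (fun i => H (u i) - H (sMean u) - (jac H (sMean u)).mulVec (u i - sMean u))
          (fun i => H (u i) - H (sMean u) - (jac H (sMean u)).mulVec (u i - sMean u))) ≤
      M₂ ^ 2 * K * du ^ 2 * spNorm (sCov u u) ^ 2 := by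
  exact residual_aux H M₂ (jac H) hTay u
end
end
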